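/- Let F = ℚ(s) be the field of rational functions in one variable s over ℚ, with s the generator, and set α = s². For every integer k ≥ 2 and every partition λ, the element s^{k−2} · M_k^s(λ) of F is a polynomial in α with integer coefficients, i.e. it lies in the subring ℤ[s²] of F. -/

import Mathlib

open scoped BigOperators Classical
open Polynomial

noncomputable section

namespace JackPaper

/-! ## Partitions: parts, corners, moments, free cumulants -/

/-- The `i`-th part (1-indexed) of a partition, `0` if `i` exceeds the length. -/
def pt {n : ℕ} (lam : n.Partition) (i : ℕ) : ℕ :=
  ((lam.parts.sort (· ≤ ·)).reverse).getD (i - 1) 0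

/-- Indices of outer corners: `0 ≤ i ≤ ℓ` with `λ_i > λ_{i+1}` (convention `λ_0 = +∞`). -/
def outerIdx {n : ℕ} (lam : n.Partition) : Finset ℕ :=
  (Finset.range (Multiset.card lam.parts + 1)).filter
    (fun i => i = 0 ∨ pt lam (i + 1) < pt lam i)

/-- Indices of inner corners: `1 ≤ i ≤ ℓ` with `λ_i > λ_{i+1}`. -/
def innerIdx {n : ℕ} (lam : n.Partition) : Finset ℕ :=
  (Finset.range (Multiset.card lam.parts + 1)).filter
    (fun i => i ≠ 0 ∧ pt lam (i + 1) < pt lam i)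

/-- Multiset of contents `λ_{i+1} − i` of the outer corners of a Young diagram. -/
def outerContents {n : ℕ} (lam : n.Partition) : Multiset ℤ :=
  (outerIdx lam).val.map (fun i => (pt lam (i + 1) : ℤ) - (i : ℤ))

/-- Multiset of contents `λ_i − i` of the inner corners of a Young diagram. -/
def innerContents {n : ℕ} (lam : n.Partition) : Multiset ℤ :=
  (innerIdx lam).val.map (fun i => (pt lam i : ℤ) - (i : ℤ))

variable (K : Type*) [Field K]

/-- Anisotropic outer corner contents `s·λ_{i+1} − i·s⁻¹`. -/
def outerContentsA (s : K) {n : ℕ} (lam : n.Partition) : Multiset K :=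
  (outerIdx lam).val.map (fun i => s * (pt lam (i + 1) : K) - (i : K) * s⁻¹)

/-- Anisotropic inner corner contents `s·λ_i − i·s⁻¹`. -/
def innerContentsA (s : K) {n : ℕ} (lam : n.Partition) : Multiset K :=
  (innerIdx lam).val.map (fun i => s * (pt lam i : K) - (i : K) * s⁻¹)

/-- The generating series `Σ_k M_k^s(λ) w^k` of the anisotropic moments of `λ`, defined as
`∏_{c ∈ I_λ^s} (1 − c·w) · (∏_{c ∈ O_λ^s} (1 − c·w))⁻¹`. -/
def momentSeries (s : K) {n : ℕ} (lam : n.Partition) : PowerSeries K :=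
  ((innerContentsA K s lam).map (fun c => 1 - PowerSeries.C c * PowerSeries.X)).prod *
    (((outerContentsA K s lam).map (fun c => 1 - PowerSeries.C c * PowerSeries.X)).prod)⁻¹

/-- The `k`-th anisotropic moment `M_k^s(λ)`. -/
def M (s : K) {n : ℕ} (lam : n.Partition) (k : ℕ) : K :=
  PowerSeries.coeff k (momentSeries K s lam)

/-- The anisotropic free cumulants `R_k^s(λ)`: the unique scalars satisfying
`C(w) = 1 + Σ_{k ≥ 1} R_k (w·C(w))^k` where `C(w) = Σ_k M_k^s(λ) w^k`, i.e. for every `m ≥ 1`,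
`M_m = Σ_{k=1}^{m} R_k · [w^m] (w C(w))^k`; since `[w^m] (w C(w))^m = 1` this determines `R_m`
recursively. -/
def Rcum (s : K) {n : ℕ} (lam : n.Partition) : ℕ → K
  | m =>
    PowerSeries.coeff m (momentSeries K s lam) -
      ∑ k ∈ (Finset.Icc 1 (m - 1)).attach,
        Rcum s lam k.1 *
          PowerSeries.coeff m ((PowerSeries.X * momentSeries K s lam) ^ (k.1 : ℕ))
  termination_by m => m
  decreasing_by
    have hk := k.2
    simp only [Finset.mem_Icc] at hk
    omega

/-! ## Jack families over `F = ℚ(s)` -/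

/-- The field `F = ℚ(s)` of rational functions in one variable over `ℚ`. -/
abbrev F : Type := RatFunc ℚ

/-- `z_ρ = ρ_1 ρ_2 ⋯ m_1(ρ)! m_2(ρ)! ⋯`. -/
def zee {n : ℕ} (ρ : n.Partition) : ℕ :=
  ρ.parts.prod * ∏ j ∈ Finset.Icc 1 n, (ρ.parts.count j).factorial

/-- Dominance order: `Dominates λ μ` means `μ ⊴ λ`, i.e.
`μ_1 + ⋯ + μ_i ≤ λ_1 + ⋯ + λ_i` for all `i`. -/
def Dominates {n : ℕ} (lam mu : n.Partition) : Prop :=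
  ∀ i : ℕ, ∑ j ∈ Finset.Icc 1 i, pt mu j ≤ ∑ j ∈ Finset.Icc 1 i, pt lam j

/-- The partition `(1,…,1)` of `n`. -/
def onesPartition (n : ℕ) : n.Partition :=
  ⟨Multiset.replicate n 1, fun hi => by rw [Multiset.eq_of_mem_replicate hi]; norm_num,
    by simp⟩

/-- A family of symmetric polynomials in `N` variables over `F`, given through the coefficients
`c` of its monomial expansions and `θ` of its power-sum expansions, is a Jack family for the
parameter `α` if: (0) both expansions agree (this defines `J_λ = Σ_μ c_{λμ} m_μ = Σ_ρ θ_ρ(λ) p_ρ`);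
(i) `c λ μ = 0` unless `μ ⊴ λ`; (ii) `Σ_ρ z_ρ α^{ℓ(ρ)} θ_ρ(λ) θ_ρ(ν) = 0` for `λ ≠ ν`;
(iii) `c_{λ,(1,…,1)} = n!`. -/
def IsJackFamily (n N : ℕ) (α : F) (c θ : n.Partition → n.Partition → F) : Prop :=
  (∀ lam : n.Partition,
      (∑ mu : n.Partition, c lam mu • MvPolynomial.msymm (Fin N) F mu) =
        ∑ ρ : n.Partition, θ ρ lam • MvPolynomial.psumPart (Fin N) F ρ) ∧
  (∀ lam mu : n.Partition, ¬ Dominates lam mu → c lam mu = 0) ∧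
  (∀ lam nu : n.Partition, lam ≠ nu →
      ∑ ρ : n.Partition, (zee ρ : F) * α ^ (Multiset.card ρ.parts) * θ ρ lam * θ ρ nu = 0) ∧
  (∀ lam : n.Partition, c lam (onesPartition n) = (n.factorial : F))

/-- `μ ∪ (1^{m−k})`: the partition of `m` obtained from `μ ⊢ k` by adding `m − k` parts
equal to `1`. -/
def padOnes {k m : ℕ} (mu : k.Partition) (h : k ≤ m) : m.Partition :=
  ⟨mu.parts + Multiset.replicate (m - k) 1, by
    intro i hi
    rcases Multiset.mem_add.1 hi with h' | h'
    · exact mu.parts_pos h'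
    · rw [Multiset.eq_of_mem_replicate h']; norm_num, by
    simp [mu.parts_sum]; omega⟩

/-- The Jack character
`Ch_μ(λ) = s^{−(|μ|−ℓ(μ))} · C(|λ|−|μ|+m₁(μ), m₁(μ)) · z_μ · θ_{μ ∪ 1^{|λ|−|μ|}}(λ)`. -/
def Ch (θ : ∀ n : ℕ, n.Partition → n.Partition → F) {k m : ℕ} (mu : k.Partition)
    (lam : m.Partition) (h : k ≤ m) : F :=
  (RatFunc.X ^ (k - Multiset.card mu.parts))⁻¹ *
    ((m - k + mu.parts.count 1).choose (mu.parts.count 1) : F) * (zee mu : F) *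
    θ m (padOnes mu h) lam

/-- `γ = (1 − α)/√α = (1 − s²)/s ∈ ℚ(s)`. -/
def gammaF : F := (1 - RatFunc.X ^ 2) * (RatFunc.X)⁻¹

/-- The partition obtained from `μ` by adding `1` to every part (the decreasing rearrangement
of `(μ_1+1, …, μ_{ℓ(μ)}+1)`), a partition of `|μ| + ℓ(μ)`. -/
def addOne {k : ℕ} (mu : k.Partition) : (k + Multiset.card mu.parts).Partition :=
  ⟨mu.parts.map (· + 1), by
    intro i hi
    obtain ⟨a, _, rfl⟩ := Multiset.mem_map.1 hi
    omega, by
    have h : ∀ m : Multiset ℕ, (m.map (· + 1)).sum = m.sum + Multiset.card m := by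
      intro m
      induction m using Multiset.induction_on with
      | empty => simp
      | cons a s ih => simp [ih]; omega
    rw [h, mu.parts_sum]⟩

/-! ## The α-Plancherel measure and limit shape -/

/-- `j`-th part of the conjugate partition: the number of parts of `λ` that are `≥ j`. -/
def conj {n : ℕ} (lam : n.Partition) (j : ℕ) : ℕ :=
  Multiset.card (lam.parts.filter (fun p => j ≤ p))

/-- The deformed hook product
`j_λ^{(α)} = ∏_{(i,j) ∈ λ} (α(λ_i−j) + (λ'_j−i) + 1)·(α(λ_i−j) + (λ'_j−i) + α)`. -/
def jackJ (R : Type*) [CommRing R] (α : R) {n : ℕ} (lam : n.Partition) : R :=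
  ∏ i ∈ Finset.Icc 1 (Multiset.card lam.parts), ∏ j ∈ Finset.Icc 1 (pt lam i),
    ((α * ((pt lam i - j : ℕ) : R) + ((conj lam j - i : ℕ) : R) + 1) *
      (α * ((pt lam i - j : ℕ) : R) + ((conj lam j - i : ℕ) : R) + α))

/-- The `α`-Plancherel weight `w_n^{(α)}(λ) = αⁿ n! / j_λ^{(α)}`. -/
def wPl (α : ℝ) (n : ℕ) (lam : n.Partition) : ℝ :=
  α ^ n * (n.factorial : ℝ) / jackJ ℝ α lam

/-- The profile `ω_{s,t,λ}` of the anisotropic Young diagram `T_{s,t}(λ)`: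
`ω_{s,t,λ}(x) = inf{ u + v : u,v ≥ 0, u − v = x, v ≥ t·#{i : s λ_i > u} }`. -/
def profile (s t : ℝ) {n : ℕ} (lam : n.Partition) (x : ℝ) : ℝ :=
  sInf { w : ℝ | ∃ u v : ℝ, 0 ≤ u ∧ 0 ≤ v ∧ u - v = x ∧
    t * (Multiset.card (lam.parts.filter (fun p => u < s * (p : ℝ))) : ℝ) ≤ v ∧ w = u + v }

/-- The Logan–Shepp–Kerov–Vershik limit shape `Ω`. -/
def Omega (x : ℝ) : ℝ :=
  if 2 ≤ |x| then |x|
  else (2 / Real.pi) * (x * Real.arcsin (x / 2) + Real.sqrt (4 - x ^ 2))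
lemma geom_mul {R : Type*} [CommRing R] (c : R) :
    (1 - PowerSeries.C c * PowerSeries.X) * PowerSeries.mk (fun n => c ^ n) = 1 := by
  have h : (1 - PowerSeries.C c * PowerSeries.X) * PowerSeries.mk (fun n => c ^ n)
      = PowerSeries.mk (fun n => c ^ n)
        - PowerSeries.C c * (PowerSeries.X * PowerSeries.mk (fun n => c ^ n)) := by ring
  rw [h]
  ext n
  cases n with
  | zero => simp
  | succ m =>
    simp [PowerSeries.coeff_succ_X_mul, PowerSeries.coeff_mk, pow_succ, mul_comm,
      PowerSeries.coeff_one]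

lemma mk_zero_pow {R : Type*} [CommRing R] :
    PowerSeries.mk (fun n => (0:R) ^ n) = 1 := by
  ext n
  cases n <;> simp [PowerSeries.coeff_mk, PowerSeries.coeff_one]

lemma prod_geom_inv {K : Type*} [Field K] (m : Multiset K) :
    ((m.map (fun c => 1 - PowerSeries.C c * PowerSeries.X)).prod)⁻¹ =
      (m.map (fun c => PowerSeries.mk (fun n => c ^ n))).prod := by
  have hc : PowerSeries.constantCoeff
      ((m.map (fun c => 1 - PowerSeries.C c * PowerSeries.X)).prod) ≠ 0 := by
    rw [map_multiset_prod, Multiset.map_map]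
    have h : m.map ((PowerSeries.constantCoeff) ∘
        (fun c => 1 - PowerSeries.C c * PowerSeries.X)) = m.map (fun _ => (1:K)) :=
      Multiset.map_congr rfl (fun c _ => by simp)
    rw [h, Multiset.prod_map_one]
    exact one_ne_zero
  rw [PowerSeries.inv_eq_iff_mul_eq_one hc, ← Multiset.prod_map_mul]
  have h : m.map (fun c => PowerSeries.mk (fun n => c ^ n) *
      (1 - PowerSeries.C c * PowerSeries.X)) = m.map (fun _ => (1 : PowerSeries K)) :=
    Multiset.map_congr rfl (fun c _ => by rw [mul_comm, geom_mul])
  rw [h, Multiset.prod_map_one]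

lemma outerIdx_val {n : ℕ} (lam : n.Partition) :
    (outerIdx lam).val = 0 ::ₘ (innerIdx lam).val := by
  have h0 : 0 ∉ innerIdx lam := by simp [innerIdx]
  have h : outerIdx lam = insert 0 (innerIdx lam) := by
    ext i
    simp only [outerIdx, innerIdx, Finset.mem_insert, Finset.mem_filter, Finset.mem_range]
    constructor
    · rintro ⟨h1, h2 | h2⟩
      · exact Or.inl h2
      · by_cases hi : i = 0
        · exact Or.inl hi
        · exact Or.inr ⟨h1, hi, h2⟩
    · rintro (rfl | ⟨h1, h2, h3⟩)
      · exact ⟨Nat.succ_pos _, Or.inl rfl⟩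
      · exact ⟨h1, Or.inr h3⟩
  rw [h, Finset.insert_val_of_notMem h0]


lemma rescale_one_sub {K : Type*} [CommRing K] (r b : K) :
    PowerSeries.rescale r (1 - PowerSeries.C b * PowerSeries.X) =
      1 - PowerSeries.C (b * r) * PowerSeries.X := by
  ext n
  simp only [PowerSeries.coeff_rescale, map_sub, PowerSeries.coeff_one,
    PowerSeries.coeff_C_mul, PowerSeries.coeff_X, mul_ite, mul_one, mul_zero]
  split_ifs <;> simp_all <;> ring

lemma rescale_mk_pow {K : Type*} [CommRing K] (r b : K) :
    PowerSeries.rescale r (PowerSeries.mk fun n => b ^ n) =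
      PowerSeries.mk fun n => (b * r) ^ n := by
  rw [PowerSeries.rescale_mk]
  ext n
  simp [PowerSeries.coeff_mk, mul_pow, mul_comm]

lemma psmap_one_sub {R S : Type*} [CommRing R] [CommRing S] (f : R →+* S) (c : R) :
    PowerSeries.map f (1 - PowerSeries.C c * PowerSeries.X) =
      1 - PowerSeries.C (f c) * PowerSeries.X := by
  simp [map_sub, map_mul, PowerSeries.map_C, PowerSeries.map_X]

lemma psmap_mk_pow {R S : Type*} [CommRing R] [CommRing S] (f : R →+* S) (c : R) :
    PowerSeries.map f (PowerSeries.mk fun n => c ^ n) =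
      PowerSeries.mk fun n => (f c) ^ n := by
  ext n
  simp [PowerSeries.coeff_map, PowerSeries.coeff_mk]

/-- Inner-corner content as a polynomial in `α`. -/
def aP {n : ℕ} (lam : n.Partition) (i : ℕ) : Polynomial ℤ :=
  Polynomial.X * (pt lam i : Polynomial ℤ) - (i : Polynomial ℤ)

/-- Outer-corner content as a polynomial in `α`. -/
def bP {n : ℕ} (lam : n.Partition) (i : ℕ) : Polynomial ℤ :=
  Polynomial.X * (pt lam (i + 1) : Polynomial ℤ) - (i : Polynomial ℤ)

/-- The moment series after the substitution `w ↦ w/s`, with coefficients in `ℤ[α]`. -/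
def Gser {n : ℕ} (lam : n.Partition) : PowerSeries (Polynomial ℤ) :=
  ((innerIdx lam).val.map
      (fun i => 1 - PowerSeries.C (aP lam i) * PowerSeries.X)).prod *
    ((outerIdx lam).val.map (fun i => PowerSeries.mk (fun n => (bP lam i) ^ n))).prod

lemma map_Gser {n : ℕ} (lam : n.Partition) {S : Type*} [CommRing S]
    (f : Polynomial ℤ →+* S) :
    PowerSeries.map f (Gser lam) =
      ((innerIdx lam).val.map
          (fun i => 1 - PowerSeries.C (f (aP lam i)) * PowerSeries.X)).prod *
        ((outerIdx lam).val.map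
          (fun i => PowerSeries.mk (fun n => (f (bP lam i)) ^ n))).prod := by
  unfold Gser
  rw [map_mul, map_multiset_prod, map_multiset_prod, Multiset.map_map, Multiset.map_map]
  congr 1
  · exact congrArg Multiset.prod (Multiset.map_congr rfl fun i _ => psmap_one_sub f _)
  · exact congrArg Multiset.prod (Multiset.map_congr rfl fun i _ => psmap_mk_pow f _)

lemma map_eval0_Gser {n : ℕ} (lam : n.Partition) :
    PowerSeries.map (Polynomial.evalRingHom (0:ℤ)) (Gser lam) = 1 := by
  rw [map_Gser]
  have ha : ∀ i : ℕ, (Polynomial.evalRingHom (0:ℤ)) (aP lam i) = -(i:ℤ) := by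
    intro i; simp [aP]
  have hb : ∀ i : ℕ, (Polynomial.evalRingHom (0:ℤ)) (bP lam i) = -(i:ℤ) := by
    intro i; simp [bP]
  simp only [ha, hb]
  rw [outerIdx_val lam, Multiset.map_cons, Multiset.prod_cons]
  have h0 : PowerSeries.mk (fun n => (-((0:ℕ):ℤ)) ^ n) = 1 := by
    rw [show -((0:ℕ):ℤ) = 0 by simp]; exact mk_zero_pow
  rw [h0, one_mul, ← Multiset.prod_map_mul]
  have h : (innerIdx lam).val.map
      (fun (i : ℕ) => (1 - PowerSeries.C (-(i:ℤ)) * PowerSeries.X) *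
        PowerSeries.mk (fun n => (-(i:ℤ)) ^ n)) =
      (innerIdx lam).val.map (fun (_ : ℕ) => (1 : PowerSeries ℤ)) :=
    Multiset.map_congr rfl (fun i _ => geom_mul _)
  rw [h, Multiset.prod_map_one]


lemma phi_content (p i : ℕ) :
    (Polynomial.aeval ((RatFunc.X : F) ^ 2))
        (Polynomial.X * (p : Polynomial ℤ) - (i : Polynomial ℤ)) * (RatFunc.X : F)⁻¹ =
      RatFunc.X * (p : F) - (i : F) * (RatFunc.X : F)⁻¹ := by
  have hs : (RatFunc.X : F) ≠ 0 := RatFunc.X_ne_zero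
  rw [map_sub, map_mul, Polynomial.aeval_X, map_natCast, map_natCast]
  field_simp

lemma momentSeries_eq {n : ℕ} (lam : n.Partition) :
    momentSeries F RatFunc.X lam =
      PowerSeries.rescale (RatFunc.X : F)⁻¹
        (PowerSeries.map (Polynomial.aeval ((RatFunc.X : F) ^ 2)).toRingHom (Gser lam)) := by
  rw [map_Gser, map_mul, map_multiset_prod, map_multiset_prod, Multiset.map_map,
    Multiset.map_map]
  unfold momentSeries innerContentsA outerContentsA
  rw [prod_geom_inv, Multiset.map_map, Multiset.map_map]
  congr 1
  · refine congrArg Multiset.prod (Multiset.map_congr rfl fun i _ => ?_)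
    show 1 - PowerSeries.C (RatFunc.X * (pt lam i : F) - (i : F) * (RatFunc.X : F)⁻¹) *
        PowerSeries.X = _
    rw [Function.comp_apply, rescale_one_sub]
    simp only [aP, AlgHom.toRingHom_eq_coe, RingHom.coe_coe]
    rw [phi_content]
  · refine congrArg Multiset.prod (Multiset.map_congr rfl fun i _ => ?_)
    show PowerSeries.mk
        (fun n => (RatFunc.X * (pt lam (i+1) : F) - (i : F) * (RatFunc.X : F)⁻¹) ^ n) = _
    rw [Function.comp_apply, rescale_mk_pow]
    simp only [bP, AlgHom.toRingHom_eq_coe, RingHom.coe_coe]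
    rw [phi_content]

/-- for `k ≥ 2`, `s^{k−2}·M_k^s(λ)` lies in `ℤ[s²] ⊆ ℚ(s)`,
i.e. it is a polynomial in `α = s²` with integer coefficients. -/
theorem moment_polynomial_in_alpha (k : ℕ) (hk : 2 ≤ k) (n : ℕ) (lam : n.Partition) :
    ∃ P : Polynomial ℤ,
      RatFunc.X ^ (k - 2) * M F RatFunc.X lam k =
        Polynomial.aeval ((RatFunc.X : F) ^ 2) P := by
  have hs : (RatFunc.X : F) ≠ 0 := RatFunc.X_ne_zero
  obtain ⟨P, hP⟩ : Polynomial.X ∣ PowerSeries.coeff k (Gser lam) := by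
    rw [Polynomial.X_dvd_iff, Polynomial.coeff_zero_eq_eval_zero]
    have h := congrArg (PowerSeries.coeff k) (map_eval0_Gser lam)
    rw [PowerSeries.coeff_map] at h
    have hk0 : k ≠ 0 := by omega
    simpa [PowerSeries.coeff_one, hk0] using h
  refine ⟨P, ?_⟩
  have hM : M F RatFunc.X lam k =
      ((RatFunc.X : F)⁻¹) ^ k *
        (Polynomial.aeval ((RatFunc.X : F) ^ 2))
          (PowerSeries.coeff k (Gser lam)) := by
    rw [M, momentSeries_eq, PowerSeries.coeff_rescale, PowerSeries.coeff_map]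
    rfl
  rw [hM, hP, map_mul, Polynomial.aeval_X, inv_pow]
  set A : F := (Polynomial.aeval ((RatFunc.X : F) ^ 2)) P
  have h1 : (RatFunc.X : F) ^ (k - 2) * (RatFunc.X : F) ^ 2 = (RatFunc.X : F) ^ k := by
    rw [← pow_add]; congr 1; omega
  have h2 : (RatFunc.X : F) ^ (k - 2) * (((RatFunc.X : F) ^ k)⁻¹ * ((RatFunc.X : F) ^ 2 * A)) =
      ((RatFunc.X : F) ^ (k - 2) * (RatFunc.X : F) ^ 2) * (((RatFunc.X : F) ^ k)⁻¹ * A) := by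
    ring
  rw [h2, h1, ← mul_assoc, mul_inv_cancel₀ (pow_ne_zero _ hs), one_mul]


end JackPaper
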